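/- arXiv:2307.11822 — 2 statements merged into one kernel-verified Lean document; each statement's English description precedes it below -/
import Mathlib

section
/- Let A be an m×n SR(ε) matrix (every nonzero r×r minor has sign ε_r), with ε_0 := 1. If x ∈ ℝ^n satisfies Ax ≠ 0 and S^-(Ax) = S^-(x) = r for some 0 ≤ r ≤ min{m,n}−1, then the sign of the first nonzero component of Ax equals ε_r ε_{r+1} times the sign of the first nonzero component of x. -/
open Matrix Filter

/-- Number of sign changes in a list of reals (consecutive pairs with negative product). -/
noncomputable def signChanges (l : List ℝ) : ℕ :=
  (l.zip l.tail).countP (fun p => decide (p.1 * p.2 < 0))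

/-- `S^-(v)`: sign changes of the coordinates of `v` after discarding zero entries. -/
noncomputable def Sm {n : ℕ} (v : Fin n → ℝ) : ℕ :=
  signChanges ((List.ofFn v).filter (fun x => decide (x ≠ 0)))

/-- `S^+(v)`: maximal number of sign changes over all ±1 completions of the zero
entries of `v`, with the convention `S^+(0) = n`. -/
noncomputable def Sp {n : ℕ} (v : Fin n → ℝ) : ℕ :=
  if v = 0 then n
  else Finset.univ.sup (fun σ : Fin n → Bool =>
    signChanges (List.ofFn (fun i => if v i = 0 then (if σ i then (1:ℝ) else -1) else v i)))

/-- First nonzero entry of a vector (`0` if the vector is zero). -/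
noncomputable def firstNz {n : ℕ} (v : Fin n → ℝ) : ℝ :=
  ((List.ofFn v).filter (fun x => decide (x ≠ 0))).headI

/-- `A` is strictly sign regular with sign pattern `ε`:
every `r × r` minor (`1 ≤ r ≤ min m n`) is nonzero with sign `ε r`. -/
def ssrPattern {m n : ℕ} (A : Matrix (Fin m) (Fin n) ℝ) (ε : ℕ → ℝ) : Prop :=
  ∀ r : ℕ, 1 ≤ r → r ≤ min m n → ∀ (f : Fin r → Fin m) (g : Fin r → Fin n),
    StrictMono f → StrictMono g → 0 < ε r * (A.submatrix f g).det

/-- `A` is sign regular with sign pattern `ε`: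
every nonzero `r × r` minor (`1 ≤ r ≤ min m n`) has sign `ε r`. -/
def srPattern {m n : ℕ} (A : Matrix (Fin m) (Fin n) ℝ) (ε : ℕ → ℝ) : Prop :=
  ∀ r : ℕ, 1 ≤ r → r ≤ min m n → ∀ (f : Fin r → Fin m) (g : Fin r → Fin n),
    StrictMono f → StrictMono g → 0 ≤ ε r * (A.submatrix f g).det

/-- The map `f` picks out consecutive indices. -/
def Contig {r m : ℕ} (f : Fin r → Fin m) : Prop :=
  ∃ a : ℕ, ∀ i : Fin r, (f i : ℕ) = a + (i : ℕ)



lemma signChanges_nil : signChanges ([] : List ℝ) = 0 := rfl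
lemma signChanges_single (a : ℝ) : signChanges [a] = 0 := rfl

lemma signChanges_cons_cons (a b : ℝ) (t : List ℝ) :
    signChanges (a :: b :: t) = (if a * b < 0 then 1 else 0) + signChanges (b :: t) := by
  simp only [signChanges, List.tail_cons, List.zip_cons_cons, List.countP_cons]
  by_cases h : a * b < 0 <;> simp [h] <;> omega

lemma sc_le_append (L M : List ℝ) : signChanges L ≤ signChanges (L ++ M) := by
  induction L with
  | nil => simp [signChanges_nil]
  | cons a t ih =>
    cases t with
    | nil => simp [signChanges_single]
    | cons b t' =>
      rw [List.cons_append, List.cons_append, signChanges_cons_cons, signChanges_cons_cons]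
      have := ih
      rw [List.cons_append] at this
      omega

lemma sc_concat_le (L : List ℝ) (a : ℝ) : signChanges (L ++ [a]) ≤ signChanges L + 1 := by
  induction L with
  | nil => simp [signChanges_nil, signChanges_single]
  | cons x t ih =>
    cases t with
    | nil =>
      rw [List.cons_append, List.nil_append, signChanges_cons_cons, signChanges_single,
        signChanges_single]
      split <;> omega
    | cons b t' =>
      rw [List.cons_append, List.cons_append, signChanges_cons_cons, signChanges_cons_cons]
      have := ih
      rw [List.cons_append] at this
      omega

lemma sc_last_sign : ∀ (L : List ℝ) (h : L ≠ []), (∀ a ∈ L, a ≠ 0) →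
    0 < L.getLast h * L.headI * (-1 : ℝ) ^ signChanges L
  | [], h, _ => absurd rfl h
  | [a], _, hnz => by
      have ha : a ≠ 0 := hnz a (by simp)
      simp [signChanges_single]
      positivity
  | a :: b :: t, _, hnz => by
      have ih := sc_last_sign (b :: t) (by simp) (fun x hx => hnz x (by simp [hx]))
      have ha : a ≠ 0 := hnz a (by simp)
      have hb : b ≠ 0 := hnz b (by simp)
      rw [signChanges_cons_cons]
      have hlast : (a :: b :: t).getLast (by simp) = (b :: t).getLast (by simp) := by
        rw [List.getLast_cons]
      rw [hlast]
      simp only [List.headI] at ih ⊢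
      set G := (b :: t).getLast (by simp) with hG
      rcases lt_trichotomy (a * b) 0 with h | h | h
      · rw [if_pos h, pow_add, pow_one]
        nlinarith [mul_pos ih (show (0:ℝ) < -(a*b) by linarith), mul_self_pos.mpr hb]
      · exact absurd h (mul_ne_zero ha hb)
      · rw [if_neg (by linarith), zero_add]
        nlinarith [mul_pos ih h, mul_self_pos.mpr hb]





noncomputable def auxP {n : ℕ} (v : Fin n → ℝ) (q : ℕ) : List ℝ :=
  ((List.ofFn v).take q).filter (fun x => decide (x ≠ 0))

noncomputable def auxB {n : ℕ} (v : Fin n → ℝ) (q : ℕ) : ℕ := signChanges (auxP v q)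

lemma auxP_succ {n : ℕ} (v : Fin n → ℝ) (q : ℕ) (h : q < n) :
    auxP v (q+1) = auxP v q ++ (if v ⟨q, h⟩ = 0 then [] else [v ⟨q, h⟩]) := by
  unfold auxP
  have hlen : q < (List.ofFn v).length := by simp [h]
  rw [← List.take_concat_get' _ _ hlen, List.filter_append]
  congr 1
  by_cases hv : v ⟨q, h⟩ = 0 <;> simp [List.getElem_ofFn, hv]

lemma auxP_ge {n : ℕ} (v : Fin n → ℝ) (q : ℕ) (h : n ≤ q) :
    auxP v q = (List.ofFn v).filter (fun x => decide (x ≠ 0)) := by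
  unfold auxP
  rw [List.take_of_length_le (by simp [h])]

lemma auxB_mono {n : ℕ} (v : Fin n → ℝ) : Monotone (auxB v) := by
  apply monotone_nat_of_le_succ
  intro q
  by_cases h : q < n
  · unfold auxB
    rw [auxP_succ v q h]
    split
    · simp
    · exact sc_le_append _ _
  · unfold auxB
    rw [auxP_ge v (q+1) (by omega), auxP_ge v q (by omega)]

lemma auxB_step {n : ℕ} (v : Fin n → ℝ) (q : ℕ) : auxB v (q+1) ≤ auxB v q + 1 := by
  by_cases h : q < n
  · unfold auxB
    rw [auxP_succ v q h]
    split
    · simp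
    · exact sc_concat_le _ _
  · unfold auxB
    rw [auxP_ge v (q+1) (by omega), auxP_ge v q (by omega)]
    omega

lemma auxB_zero {n : ℕ} (v : Fin n → ℝ) : auxB v 0 = 0 := signChanges_nil

lemma auxB_top {n : ℕ} (v : Fin n → ℝ) (q : ℕ) (h : n ≤ q) : auxB v q = Sm v := by
  unfold auxB Sm
  rw [auxP_ge v q h]

lemma auxP_headI {n : ℕ} (v : Fin n → ℝ) (q : ℕ) (h : auxP v q ≠ []) :
    (auxP v q).headI = firstNz v := by
  have hsplit : (List.ofFn v).filter (fun x => decide (x ≠ 0)) =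
      auxP v q ++ ((List.ofFn v).drop q).filter (fun x => decide (x ≠ 0)) := by
    unfold auxP
    rw [← List.filter_append, List.take_append_drop]
  unfold firstNz
  rw [hsplit]
  cases hP : auxP v q with
  | nil => exact absurd hP h
  | cons a t => simp

lemma auxP_mem_ne {n : ℕ} (v : Fin n → ℝ) (q : ℕ) (a : ℝ) (ha : a ∈ auxP v q) : a ≠ 0 := by
  have := List.of_mem_filter ha
  simpa using this

lemma aux_sign {n : ℕ} (v : Fin n → ℝ) (q : Fin n) (hq : v q ≠ 0) :
    0 < v q * firstNz v * (-1:ℝ) ^ auxB v ((q:ℕ)+1) := by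
  have hs := auxP_succ v q q.isLt
  rw [if_neg (by simpa [Fin.eta] using hq)] at hs
  have hne : auxP v ((q:ℕ)+1) ≠ [] := by
    rw [hs]; simp
  have hlast : (auxP v ((q:ℕ)+1)).getLast hne = v q := by
    have : (auxP v ((q:ℕ)+1)).getLast hne
        = (auxP v (q:ℕ) ++ [v ⟨(q:ℕ), q.isLt⟩]).getLast (by simp) := by
      congr 1 <;> rw [hs]
    rw [this]
    simp [List.getLast_append]
  have hhead := auxP_headI v ((q:ℕ)+1) hne
  have hmain := sc_last_sign _ hne (fun a ha => auxP_mem_ne v _ a ha)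
  rw [hlast, hhead] at hmain
  exact hmain

lemma aux_ivt (f : ℕ → ℕ) (h0 : f 0 = 0) (hstep : ∀ i, f (i+1) ≤ f i + 1) :
    ∀ (N k : ℕ), k ≤ f N → ∃ i, i ≤ N ∧ f i = k := by
  intro N
  induction N with
  | zero => intro k hk; exact ⟨0, le_refl _, by omega⟩
  | succ N ih =>
    intro k hk
    by_cases h : k ≤ f N
    · obtain ⟨i, hi, hfi⟩ := ih k h
      exact ⟨i, by omega, hfi⟩
    · have := hstep N
      exact ⟨N+1, le_refl _, by omega⟩

lemma auxP_nil_of_zero {n : ℕ} (v : Fin n → ℝ) (q : ℕ)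
    (h : ∀ (j : Fin n), (j:ℕ) < q → v j = 0) : auxP v q = [] := by
  induction q with
  | zero => rfl
  | succ q ih =>
    by_cases hq : q < n
    · rw [auxP_succ v q hq, ih (fun j hj => h j (by omega)), if_pos (h ⟨q,hq⟩ (by simp))]
      rfl
    · rw [auxP_ge v (q+1) (by omega), ← auxP_ge v q (by omega)]
      exact ih (fun j hj => h j (by omega))

lemma exists_ne_zero {n : ℕ} (v : Fin n → ℝ) (hv : v ≠ 0) : ∃ q, v q ≠ 0 := by
  by_contra h
  push_neg at h
  exact hv (funext h)

lemma aux_witness {n : ℕ} (v : Fin n → ℝ) (hv : v ≠ 0) (k : ℕ) (hk : k ≤ Sm v) :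
    ∃ q : Fin n, v q ≠ 0 ∧ auxB v ((q:ℕ)+1) = k := by
  classical
  rcases Nat.eq_zero_or_pos k with rfl | hkpos
  · have hex : ∃ j : ℕ, ∃ h : j < n, v ⟨j, h⟩ ≠ 0 := by
      obtain ⟨q, hq⟩ := exists_ne_zero v hv
      exact ⟨q, q.isLt, by simpa [Fin.eta] using hq⟩
    obtain ⟨hjn, hvj⟩ := Nat.find_spec hex
    refine ⟨⟨Nat.find hex, hjn⟩, hvj, ?_⟩
    have hzero : ∀ (i : Fin n), (i:ℕ) < Nat.find hex → v i = 0 := by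
      intro i hi
      by_contra hvi
      exact Nat.find_min hex hi ⟨i.isLt, by simpa [Fin.eta] using hvi⟩
    have hP : auxP v (Nat.find hex + 1) = [v ⟨Nat.find hex, hjn⟩] := by
      rw [auxP_succ v _ hjn, auxP_nil_of_zero v _ hzero, if_neg hvj]
      rfl
    show auxB v (Nat.find hex + 1) = 0
    unfold auxB
    rw [hP]
    exact signChanges_single _
  · have hex : ∃ i, auxB v i = k := by
      obtain ⟨i, _, hi⟩ := aux_ivt (auxB v) (auxB_zero v) (auxB_step v) n k
        (by rw [auxB_top v n le_rfl]; exact hk)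
      exact ⟨i, hi⟩
    have hik : auxB v (Nat.find hex) = k := Nat.find_spec hex
    have hi0 : Nat.find hex ≠ 0 := by
      intro h
      rw [h, auxB_zero] at hik
      omega
    obtain ⟨q, hq⟩ : ∃ q, Nat.find hex = q + 1 := ⟨Nat.find hex - 1, by omega⟩
    rw [hq] at hik
    have hqk : auxB v q ≠ k := Nat.find_min hex (by omega)
    have hle : auxB v q ≤ auxB v (q+1) := auxB_mono v (by omega)
    have hlt : auxB v q < k := by omega
    have hqn : q < n := by
      by_contra h
      have : auxB v (q+1) = auxB v q := by
        rw [auxB_top v _ (by omega), auxB_top v _ (by omega)]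
      omega
    have hvq : v ⟨q, hqn⟩ ≠ 0 := by
      intro h0
      have : auxB v (q+1) = auxB v q := by
        unfold auxB
        rw [auxP_succ v q hqn, if_pos h0, List.append_nil]
      omega
    exact ⟨⟨q, hqn⟩, hvq, hik⟩

lemma firstNz_ne_zero {n : ℕ} (v : Fin n → ℝ) (hv : v ≠ 0) : firstNz v ≠ 0 := by
  obtain ⟨q, hq⟩ := exists_ne_zero v hv
  have hmem : v q ∈ (List.ofFn v).filter (fun x => decide (x ≠ 0)) :=
    List.mem_filter.mpr ⟨by simp [List.mem_ofFn], by simpa using hq⟩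
  unfold firstNz
  cases hL : (List.ofFn v).filter (fun x => decide (x ≠ 0)) with
  | nil => rw [hL] at hmem; simp at hmem
  | cons a t =>
    have ha : a ∈ (List.ofFn v).filter (fun x => decide (x ≠ 0)) := by
      rw [hL]; exact List.mem_cons_self
    have := List.of_mem_filter ha
    simpa using this

lemma aux_blocks {n : ℕ} (v : Fin n → ℝ) (hv : v ≠ 0) :
    ∃ β : Fin n → ℕ, (∀ q q' : Fin n, q ≤ q' → β q ≤ β q') ∧ (∀ q, β q ≤ Sm v) ∧
      (∀ q, v q ≠ 0 → 0 < v q * firstNz v * (-1:ℝ) ^ β q) ∧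
      (∀ k, k ≤ Sm v → ∃ q, v q ≠ 0 ∧ β q = k) := by
  refine ⟨fun q => auxB v ((q:ℕ)+1), ?_, ?_, ?_, ?_⟩
  · intro q q' h
    exact auxB_mono v (by omega)
  · intro q
    rw [← auxB_top v n le_rfl]
    exact auxB_mono v q.isLt
  · exact fun q h => aux_sign v q h
  · exact fun k hk => aux_witness v hv k hk

lemma aux_sm_fin {r : ℕ} (g : Fin r → Fin (r+1)) (hg : StrictMono g) :
    ∃ t : Fin (r+1), g = Fin.succAbove t := by
  classical
  have hcard : (Finset.univ.image g).card = r := by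
    rw [Finset.card_image_of_injective _ hg.injective, Finset.card_univ, Fintype.card_fin]
  have hcompl : ((Finset.univ.image g)ᶜ).card = 1 := by
    rw [Finset.card_compl, hcard]
    simp
  obtain ⟨t, ht⟩ := Finset.card_eq_one.mp hcompl
  have hmem : ∀ j : Fin (r+1), j ∈ Finset.univ.image g ↔ ¬ (j = t) := by
    intro j
    rw [← Finset.mem_singleton, ← ht, Finset.mem_compl, not_not]
  have inst : WellFoundedLT (Fin r) := inferInstance
  refine ⟨t, (@StrictMono.range_inj (Fin r) (Fin (r+1)) _ _ inst g (Fin.succAbove t) hg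
    (Fin.strictMono_succAbove t)).mp ?_⟩
  rw [Fin.range_succAbove]
  ext j
  simp only [Set.mem_range, Set.mem_compl_iff, Set.mem_singleton_iff]
  rw [← hmem j]
  simp


lemma aux_core (r : ℕ) (ε : ℕ → ℝ) (hε0 : ε 0 = 1) (hsv : ∀ s, ε s = 1 ∨ ε s = -1)
    (D : Matrix (Fin (r+1)) (Fin (r+1)) ℝ)
    (hD : ∀ s : ℕ, 1 ≤ s → s ≤ r+1 → ∀ f g : Fin s → Fin (r+1), StrictMono f → StrictMono g →
      0 ≤ ε s * (D.submatrix f g).det)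
    (γ δ : ℝ) (hγ : γ = 1 ∨ γ = -1) (hδ : δ = 1 ∨ δ = -1)
    (z : Fin (r+1) → ℝ) (hz : ∀ j, z j = ∑ k : Fin (r+1), (γ * (-1:ℝ)^(k:ℕ)) * D j k)
    (hzs : ∀ j, 0 < z j * δ * (-1:ℝ)^(j:ℕ)) :
    δ = ε r * ε (r+1) * γ := by
  classical
  by_contra hne
  have hεr := hsv r
  have hεr1 := hsv (r+1)
  have hbad : δ * γ * ε r * ε (r+1) = -1 := by
    rcases hγ with h1|h1 <;> rcases hδ with h2|h2 <;> rcases hεr with h3|h3 <;>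
      rcases hεr1 with h4|h4 <;> rw [h1, h2, h3, h4] at hne ⊢ <;> revert hne <;> norm_num
  have hεrne : ε r ≠ 0 := by rcases hεr with h|h <;> rw [h] <;> norm_num
  have hεr1sq : ε (r+1) * ε (r+1) = 1 := by rcases hεr1 with h|h <;> rw [h] <;> norm_num
  -- Step 1: all cofactor-style minors vanish
  have hcof : ∀ t j : Fin (r+1), (D.submatrix (Fin.succAbove j) (Fin.succAbove t)).det = 0 := by
    intro t
    have e1 : (D.updateCol t z).det = γ * (-1:ℝ)^(t:ℕ) * D.det := by
      have hzfun : z = fun j => ∑ k : Fin (r+1), (γ * (-1:ℝ)^(k:ℕ)) • D j k := by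
        funext j
        rw [hz j]
        simp [smul_eq_mul]
      rw [hzfun, Matrix.det_updateCol_sum D t (fun k => γ * (-1:ℝ)^(k:ℕ))]
      simp [smul_eq_mul]
    have e2 : (D.updateCol t z).det
        = ∑ j : Fin (r+1), (-1:ℝ)^((j:ℕ)+(t:ℕ)) * z j *
            (D.submatrix (Fin.succAbove j) (Fin.succAbove t)).det := by
      rw [Matrix.det_succ_column (D.updateCol t z) t]
      refine Finset.sum_congr rfl fun j _ => ?_
      have hs : (D.updateCol t z).submatrix (Fin.succAbove j) (Fin.succAbove t)
          = D.submatrix (Fin.succAbove j) (Fin.succAbove t) := by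
        ext i c
        simp [Matrix.updateCol_apply, (Fin.succAbove_ne t c)]
      rw [hs, Matrix.updateCol_self]
    set cof := fun j : Fin (r+1) => (D.submatrix (Fin.succAbove j) (Fin.succAbove t)).det with hcofdef
    have e4 : γ * (-1:ℝ)^(t:ℕ) * D.det = ∑ j : Fin (r+1), (-1:ℝ)^((j:ℕ)+(t:ℕ)) * z j * cof j := by
      rw [← e2, e1]
    have e5 : ∑ j : Fin (r+1), (-1:ℝ)^((j:ℕ)+(t:ℕ)) * z j * cof j
        = (-1:ℝ)^(t:ℕ) * ∑ j : Fin (r+1), (-1:ℝ)^(j:ℕ) * z j * cof j := by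
      rw [Finset.mul_sum]
      refine Finset.sum_congr rfl fun j _ => ?_
      rw [pow_add]
      ring
    have hpow : (-1:ℝ)^(t:ℕ) ≠ 0 := pow_ne_zero _ (by norm_num)
    have e6 : ∑ j : Fin (r+1), (-1:ℝ)^(j:ℕ) * z j * cof j = γ * D.det := by
      apply mul_left_cancel₀ hpow
      rw [← e5, ← e4]
      ring
    have hcofsgn : ∀ j, 0 ≤ ε r * cof j := by
      intro j
      rcases Nat.eq_zero_or_pos r with hr0 | hr1
      · subst hr0
        have : cof j = 1 := Matrix.det_isEmpty
        rw [this, hε0]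
        norm_num
      · exact hD r hr1 (by omega) _ _ (Fin.strictMono_succAbove j) (Fin.strictMono_succAbove t)
    have hsum : ∑ j : Fin (r+1), (z j * δ * (-1:ℝ)^(j:ℕ)) * (ε r * cof j) = -(ε (r+1) * D.det) := by
      have hterm : ∀ j : Fin (r+1), (z j * δ * (-1:ℝ)^(j:ℕ)) * (ε r * cof j)
          = (δ * ε r) * ((-1:ℝ)^(j:ℕ) * z j * cof j) := fun j => by ring
      rw [Finset.sum_congr rfl (fun j _ => hterm j), ← Finset.mul_sum, e6]
      have hkey : δ * ε r * γ = -ε (r+1) := by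
        linear_combination ε (r+1) * hbad - δ * γ * ε r * hεr1sq
      rw [show δ * ε r * (γ * D.det) = (δ * ε r * γ) * D.det by ring, hkey]
      ring
    have htnn : ∀ j ∈ Finset.univ, 0 ≤ (z j * δ * (-1:ℝ)^(j:ℕ)) * (ε r * cof j) :=
      fun j _ => mul_nonneg (le_of_lt (hzs j)) (hcofsgn j)
    have hdetsgn : 0 ≤ ε (r+1) * D.det := by
      have := hD (r+1) (by omega) le_rfl id id strictMono_id strictMono_id
      simpa using this
    have hzero := (Finset.sum_eq_zero_iff_of_nonneg htnn).mp
      (le_antisymm (by rw [hsum]; linarith) (Finset.sum_nonneg htnn))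
    intro j
    have hj := hzero j (Finset.mem_univ j)
    have h1 := hzs j
    have h2 : ε r * cof j = 0 := by
      rcases mul_eq_zero.mp hj with h | h
      · exact absurd h (ne_of_gt h1)
      · exact h
    exact (mul_eq_zero.mp h2).resolve_left hεrne
  -- r = 0 : immediate contradiction
  rcases Nat.eq_zero_or_pos r with hr0 | hr1
  · subst hr0
    have := hcof 0 0
    rw [Matrix.det_isEmpty] at this
    exact one_ne_zero this
  -- descent step
  have hdesc : ∀ s : ℕ, 1 ≤ s → s + 1 ≤ r →
      (∀ f g : Fin (s+1) → Fin (r+1), (∃ a : ℕ, ∀ i, (f i : ℕ) = a + (i:ℕ)) → StrictMono g →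
        (D.submatrix f g).det = 0) →
      (∀ f g : Fin s → Fin (r+1), (∃ a : ℕ, ∀ i, (f i : ℕ) = a + (i:ℕ)) → StrictMono g →
        (D.submatrix f g).det = 0) := by
    intro s hs1 hsr hP1 f g cf sg
    obtain ⟨a, ha⟩ := cf
    have hlastb : a + (s-1) < r + 1 := by
      have h := (f ⟨s-1, by omega⟩).isLt
      rw [ha ⟨s-1, by omega⟩] at h
      simpa using h
    obtain ⟨f', j₀, a', ha', hff'⟩ :
        ∃ (f' : Fin (s+1) → Fin (r+1)) (j₀ : Fin (s+1)) (a' : ℕ),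
          (∀ i : Fin (s+1), (f' i : ℕ) = a' + (i:ℕ)) ∧ f = f' ∘ Fin.succAbove j₀ := by
      by_cases hc : a + s ≤ r
      · refine ⟨fun i => ⟨a + i, by have := i.isLt; omega⟩, Fin.last s, a, fun i => rfl, ?_⟩
        funext i
        apply Fin.ext
        rw [ha i]
        simp [Fin.succAbove_last]
      · have ha1 : 1 ≤ a := by omega
        refine ⟨fun i => ⟨a - 1 + i, by have := i.isLt; omega⟩, 0, a - 1, fun i => rfl, ?_⟩
        funext i
        apply Fin.ext
        rw [ha i]
        simp only [Function.comp_apply, Fin.zero_succAbove, Fin.val_succ]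
        omega
    have hf'sm : StrictMono f' := by
      intro i j hij
      have h1 : (i : ℕ) < (j : ℕ) := hij
      have h2 := ha' i
      have h3 := ha' j
      rw [Fin.lt_def]
      omega
    set NC : (Fin (s+1) → ℝ) → Matrix (Fin (s+1)) (Fin (s+1)) ℝ :=
      fun w => Matrix.of (fun i c => Fin.cases (w i) (fun t => D (f' i) (g t)) c) with hNC
    have hNupd : ∀ w : Fin (s+1) → ℝ, NC w = (NC 0).updateCol 0 w := by
      intro w
      ext i c
      rcases Fin.eq_zero_or_eq_succ c with rfl | ⟨u, rfl⟩
      · simp [hNC, Matrix.updateCol_apply]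
      · simp [hNC, Matrix.updateCol_apply, Fin.succ_ne_zero]
    have hlin : ∀ (S : Finset (Fin (r+1))) (co : Fin (r+1) → ℝ),
        (NC (fun i => ∑ k ∈ S, co k * D (f' i) k)).det
          = ∑ k ∈ S, co k * (NC (fun i => D (f' i) k)).det := by
      intro S
      induction S using Finset.induction_on with
      | empty =>
        intro co
        simp only [Finset.sum_empty]
        rw [show (fun _ : Fin (s+1) => (0:ℝ)) = ((0:ℝ) • (0 : Fin (s+1) → ℝ)) from
            funext fun _ => by simp,
          hNupd ((0:ℝ) • (0 : Fin (s+1) → ℝ)), Matrix.det_updateCol_smul, zero_mul]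
      | @insert k S hk ih =>
        intro co
        have hsplit : (fun i => ∑ k' ∈ insert k S, co k' * D (f' i) k')
            = ((fun i => co k * D (f' i) k) + (fun i => ∑ k' ∈ S, co k' * D (f' i) k')) := by
          funext i
          simp [Finset.sum_insert hk]
        rw [hsplit,
          hNupd ((fun i => co k * D (f' i) k) + (fun i => ∑ k' ∈ S, co k' * D (f' i) k')),
          Matrix.det_updateCol_add,
          show ((fun i => co k * D (f' i) k) : Fin (s+1) → ℝ) = co k • (fun i => D (f' i) k) from
            funext fun i => by simp,
          Matrix.det_updateCol_smul, ← hNupd, ← hNupd, ih co, Finset.sum_insert hk]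
    have hdetN : (NC (fun i => z (f' i))).det = 0 := by
      have hzf : (fun i => z (f' i)) = fun i => ∑ k : Fin (r+1), (γ * (-1:ℝ)^(k:ℕ)) * D (f' i) k :=
        funext fun i => hz (f' i)
      rw [hzf, hlin Finset.univ (fun k => γ * (-1:ℝ)^(k:ℕ))]
      refine Finset.sum_eq_zero fun k _ => ?_
      suffices h : (NC (fun i => D (f' i) k)).det = 0 by rw [h, mul_zero]
      by_cases hkg : ∃ t, g t = k
      · obtain ⟨t, ht⟩ := hkg
        apply Matrix.det_zero_of_column_eq (show (0 : Fin (s+1)) ≠ t.succ from (Fin.succ_ne_zero t).symm)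
        intro i
        simp [hNC, ht]
      · push_neg at hkg
        set hcg : Fin (s+1) → Fin (r+1) := fun c => Fin.cases k g c with hhcg
        have hinj : Function.Injective hcg := by
          intro c c' heq
          rcases Fin.eq_zero_or_eq_succ c with rfl | ⟨u, rfl⟩ <;>
            rcases Fin.eq_zero_or_eq_succ c' with rfl | ⟨u', rfl⟩
          · rfl
          · exact absurd (by simpa [hhcg] using heq.symm) (hkg u')
          · exact absurd (by simpa [hhcg] using heq) (hkg u)
          · have : g u = g u' := by simpa [hhcg] using heq
            rw [sg.injective this]
        have heq1 : NC (fun i => D (f' i) k) = D.submatrix f' hcg := by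
          ext i c
          rcases Fin.eq_zero_or_eq_succ c with rfl | ⟨u, rfl⟩ <;> simp [hNC, hhcg]
        set σ := Tuple.sort hcg with hσ
        have hsm2 : StrictMono (hcg ∘ ⇑σ) :=
          (Tuple.monotone_sort hcg).strictMono_of_injective (hinj.comp σ.injective)
        have heq2 : D.submatrix f' hcg = (D.submatrix f' (hcg ∘ ⇑σ)).submatrix id ⇑σ⁻¹ := by
          ext i c
          simp [Matrix.submatrix_apply, Equiv.apply_symm_apply]
        rw [heq1, heq2, Matrix.det_permute', hP1 f' (hcg ∘ ⇑σ) ⟨a', ha'⟩ hsm2, mul_zero]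
    have hlap : (NC (fun i => z (f' i))).det
        = ∑ i : Fin (s+1), (-1:ℝ)^(i:ℕ) * z (f' i) * (D.submatrix (f' ∘ Fin.succAbove i) g).det := by
      rw [Matrix.det_succ_column_zero]
      refine Finset.sum_congr rfl fun i _ => ?_
      have h1 : NC (fun i' => z (f' i')) i 0 = z (f' i) := by simp [hNC]
      have h2 : (NC (fun i' => z (f' i'))).submatrix i.succAbove Fin.succ
          = D.submatrix (f' ∘ Fin.succAbove i) g := by
        ext i' c
        simp [hNC]
      rw [h1, h2]
    have hsum0 : ∑ i : Fin (s+1), (z (f' i) * δ * (-1:ℝ)^((f' i : ℕ)))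
        * (ε s * (D.submatrix (f' ∘ Fin.succAbove i) g).det) = 0 := by
      have hterm2 : ∀ i : Fin (s+1), (z (f' i) * δ * (-1:ℝ)^((f' i : ℕ)))
            * (ε s * (D.submatrix (f' ∘ Fin.succAbove i) g).det)
          = (δ * (-1:ℝ)^a' * ε s)
            * ((-1:ℝ)^(i:ℕ) * z (f' i) * (D.submatrix (f' ∘ Fin.succAbove i) g).det) := by
        intro i
        rw [ha' i, pow_add]
        ring
      rw [Finset.sum_congr rfl fun i _ => hterm2 i, ← Finset.mul_sum, ← hlap, hdetN, mul_zero]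
    have htnn2 : ∀ i ∈ Finset.univ, 0 ≤ (z (f' i) * δ * (-1:ℝ)^((f' i : ℕ)))
        * (ε s * (D.submatrix (f' ∘ Fin.succAbove i) g).det) := by
      intro i _
      apply mul_nonneg (le_of_lt (hzs (f' i)))
      exact hD s hs1 (by omega) _ g (hf'sm.comp (Fin.strictMono_succAbove i)) sg
    have hall := (Finset.sum_eq_zero_iff_of_nonneg htnn2).mp hsum0 j₀ (Finset.mem_univ j₀)
    have hpos := hzs (f' j₀)
    have h2 : ε s * (D.submatrix (f' ∘ Fin.succAbove j₀) g).det = 0 := by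
      rcases mul_eq_zero.mp hall with h | h
      · exact absurd h (ne_of_gt hpos)
      · exact h
    have hεsne : ε s ≠ 0 := by rcases hsv s with h | h <;> rw [h] <;> norm_num
    have hfin := (mul_eq_zero.mp h2).resolve_left hεsne
    rw [hff']
    exact hfin
  -- size r case from cofactors
  have hPr : ∀ f g : Fin r → Fin (r+1), (∃ a : ℕ, ∀ i, (f i : ℕ) = a + (i:ℕ)) → StrictMono g →
      (D.submatrix f g).det = 0 := by
    intro f g cf sg
    have hfsm : StrictMono f := by
      obtain ⟨a, ha⟩ := cf
      intro i j hij
      have h1 : (i : ℕ) < (j : ℕ) := hij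
      have h2 := ha i
      have h3 := ha j
      rw [Fin.lt_def]
      omega
    obtain ⟨j, hj⟩ := aux_sm_fin f hfsm
    obtain ⟨t, htg⟩ := aux_sm_fin g sg
    rw [hj, htg]
    exact hcof t j
  -- downward induction
  have hmain : ∀ d s : ℕ, s + d = r → 1 ≤ s →
      ∀ f g : Fin s → Fin (r+1), (∃ a : ℕ, ∀ i, (f i : ℕ) = a + (i:ℕ)) → StrictMono g →
        (D.submatrix f g).det = 0 := by
    intro d
    induction d with
    | zero =>
      intro s hs _
      have hsr : s = r := by omega
      subst hsr
      exact hPr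
    | succ d ih =>
      intro s hsd hs1
      exact hdesc s hs1 (by omega) (ih (s+1) (by omega) (by omega))
  have hD0 : ∀ j k : Fin (r+1), D j k = 0 := by
    intro j k
    have h := hmain (r-1) 1 (by omega) le_rfl (fun _ => j) (fun _ => k)
      ⟨(j:ℕ), fun i => by have hi : (i:ℕ) < 1 := i.isLt; show (j:ℕ) = (j:ℕ) + (i:ℕ); omega⟩
      (fun a b hab => absurd (Subsingleton.elim a b) (ne_of_lt hab))
    simpa [Matrix.det_fin_one] using h
  have hz0 : z 0 = 0 := by
    rw [hz 0]
    simp [hD0]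
  have hfinal := hzs 0
  rw [hz0] at hfinal
  simp at hfinal


lemma aux_U_sr {m n : ℕ} (A : Matrix (Fin m) (Fin n) ℝ) (ε : ℕ → ℝ) (hA : srPattern A ε)
    (β : Fin n → ℕ) (hβ : ∀ q q' : Fin n, q ≤ q' → β q ≤ β q')
    (c : Fin n → ℝ) (hc : ∀ q, 0 ≤ c q)
    (s : ℕ) (hs1 : 1 ≤ s) (hsmn : s ≤ min m n) (r : ℕ)
    (f : Fin s → Fin m) (g : Fin s → Fin (r+1)) (hf : StrictMono f) (hg : StrictMono g) :
    0 ≤ ε s * (Matrix.of (fun i j : Fin s =>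
      ∑ q ∈ Finset.univ.filter (fun q => β q = (g j : ℕ)), c q * A (f i) q)).det := by
  classical
  set M := Matrix.of (fun i j : Fin s =>
      ∑ q ∈ Finset.univ.filter (fun q => β q = (g j : ℕ)), c q * A (f i) q) with hM
  rw [← Matrix.det_transpose M]
  have hMt : Mᵀ = fun j => ∑ q ∈ Finset.univ.filter (fun q : Fin n => β q = (g j : ℕ)),
      c q • (fun i : Fin s => A (f i) q) := by
    funext j i
    simp [hM, Finset.sum_apply]
  have hdet1 : Mᵀ.det = (Matrix.detRowAlternating : (Fin s → ℝ) [⋀^Fin s]→ₗ[ℝ] ℝ).toMultilinearMap Mᵀ := rfl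
  rw [hdet1, hMt]
  rw [MultilinearMap.map_sum_finset]
  rw [Finset.mul_sum]
  refine Finset.sum_nonneg fun φ hφ => ?_
  have hφmem : ∀ j : Fin s, β (φ j) = (g j : ℕ) := by
    intro j
    have := (Fintype.mem_piFinset.mp hφ) j
    simpa using this
  have hφsm : StrictMono φ := by
    intro i j hij
    have hgij : (g i : ℕ) < (g j : ℕ) := hg hij
    by_contra hle
    push_neg at hle
    have := hβ (φ j) (φ i) hle
    rw [hφmem i, hφmem j] at this
    omega
  have hsmul := (Matrix.detRowAlternating :
      (Fin s → ℝ) [⋀^Fin s]→ₗ[ℝ] ℝ).toMultilinearMap.map_smul_univ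
    (fun j => c (φ j)) (fun j => (fun i : Fin s => A (f i) (φ j)))
  rw [hsmul]
  have hdet2 : (Matrix.detRowAlternating : (Fin s → ℝ) [⋀^Fin s]→ₗ[ℝ] ℝ).toMultilinearMap
      (fun j => (fun i : Fin s => A (f i) (φ j))) = ((A.submatrix f φ)ᵀ).det := rfl
  rw [hdet2, Matrix.det_transpose, smul_eq_mul]
  have hAd := hA s hs1 hsmn f φ hf hφsm
  have hprod : 0 ≤ ∏ j, c (φ j) := Finset.prod_nonneg fun j _ => hc (φ j)
  nlinarith [hAd, hprod]
lemma aux_sign_pm (t : ℝ) (h : t ≠ 0) : Real.sign t = 1 ∨ Real.sign t = -1 := by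
  rcases lt_trichotomy t 0 with ht | ht | ht
  · exact Or.inr (Real.sign_of_neg ht)
  · exact absurd ht h
  · exact Or.inl (Real.sign_of_pos ht)

lemma aux_decomp (a b : ℝ) (k : ℕ) (h : 0 < a * b * (-1:ℝ)^k) :
    a = Real.sign b * (-1:ℝ)^k * |a| := by
  rcases Nat.even_or_odd k with hk | hk
  · rw [hk.neg_one_pow] at h ⊢
    rcases lt_trichotomy b 0 with hb | hb | hb
    · rw [Real.sign_of_neg hb]
      have ha : a < 0 := by nlinarith
      rw [abs_of_neg ha]; ring
    · exfalso; rw [hb] at h; nlinarith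
    · rw [Real.sign_of_pos hb]
      have ha : 0 < a := by nlinarith
      rw [abs_of_pos ha]; ring
  · rw [hk.neg_one_pow] at h ⊢
    rcases lt_trichotomy b 0 with hb | hb | hb
    · rw [Real.sign_of_neg hb]
      have ha : 0 < a := by nlinarith
      rw [abs_of_pos ha]; ring
    · exfalso; rw [hb] at h; nlinarith
    · rw [Real.sign_of_pos hb]
      have ha : a < 0 := by nlinarith
      rw [abs_of_neg ha]; ring

lemma aux_sign_pos (a b cp : ℝ) (h : 0 < a * b * cp) : 0 < a * Real.sign b * cp := by
  rcases lt_trichotomy b 0 with hb | hb | hb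
  · rw [Real.sign_of_neg hb]; nlinarith
  · exfalso; rw [hb] at h; nlinarith
  · rw [Real.sign_of_pos hb]; nlinarith

theorem stmt13 {m n : ℕ} (A : Matrix (Fin m) (Fin n) ℝ) (ε : ℕ → ℝ)
    (hε0 : ε 0 = 1) (hsv : ∀ r, ε r = 1 ∨ ε r = -1) (hA : srPattern A ε)
    (x : Fin n → ℝ) (hAx : A *ᵥ x ≠ 0) (r : ℕ) (hr : r ≤ min m n - 1)
    (h1 : Sm (A *ᵥ x) = r) (h2 : Sm x = r) :
    Real.sign (firstNz (A *ᵥ x)) = ε r * ε (r + 1) * Real.sign (firstNz x) := by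
  classical
  have hx0 : x ≠ 0 := by
    intro h
    apply hAx
    rw [h, Matrix.mulVec_zero]
  have hm0 : 0 < m := by
    rcases Nat.eq_zero_or_pos m with h | h
    · exfalso; apply hAx; subst h; exact Subsingleton.elim _ _
    · exact h
  have hn0 : 0 < n := by
    rcases Nat.eq_zero_or_pos n with h | h
    · exfalso; apply hx0; subst h; exact Subsingleton.elim _ _
    · exact h
  have hrm : r + 1 ≤ m := by omega
  have hrn : r + 1 ≤ n := by omega
  obtain ⟨βx, hβxmono, hβxle, hβxsign, hβxwit⟩ := aux_blocks x hx0
  obtain ⟨βy, hβymono, hβyle, hβysign, hβywit⟩ := aux_blocks (A *ᵥ x) hAx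
  rw [h2] at hβxle hβxwit
  rw [h1] at hβyle hβywit
  have hsel : ∀ k : Fin (r+1), ∃ q : Fin m, (A *ᵥ x) q ≠ 0 ∧ βy q = (k:ℕ) :=
    fun k => hβywit (k:ℕ) (by have := k.isLt; omega)
  choose p hp1 hp2 using hsel
  have hpmono : StrictMono p := by
    intro k k' hk
    by_contra hle
    push_neg at hle
    have hmm := hβymono (p k') (p k) hle
    rw [hp2 k, hp2 k'] at hmm
    have hkk : (k:ℕ) < (k':ℕ) := hk
    omega
  set γ := Real.sign (firstNz x) with hγdef
  set δ := Real.sign (firstNz (A *ᵥ x)) with hδdef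
  have hfnx := firstNz_ne_zero x hx0
  have hfny := firstNz_ne_zero _ hAx
  have hγpm := aux_sign_pm _ hfnx
  have hδpm := aux_sign_pm _ hfny
  set D := Matrix.of (fun (j k : Fin (r+1)) =>
    ∑ q ∈ Finset.univ.filter (fun q => βx q = (k:ℕ)), |x q| * A (p j) q) with hDdef
  have hxdec : ∀ q : Fin n, x q = γ * (-1:ℝ)^(βx q) * |x q| := by
    intro q
    by_cases hq : x q = 0
    · rw [hq]; simp [hq]
    · exact aux_decomp (x q) (firstNz x) (βx q) (hβxsign q hq)
  have hz : ∀ j : Fin (r+1), (A *ᵥ x) (p j) = ∑ k : Fin (r+1), (γ * (-1:ℝ)^(k:ℕ)) * D j k := by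
    intro j
    have h0 : (A *ᵥ x) (p j) = ∑ q, A (p j) q * x q := by
      simp [Matrix.mulVec, dotProduct]
    rw [h0]
    set φ : Fin n → Fin (r+1) := fun q => ⟨βx q, by have := hβxle q; omega⟩ with hφ
    rw [← Finset.sum_fiberwise Finset.univ φ (fun q => A (p j) q * x q)]
    refine Finset.sum_congr rfl fun k _ => ?_
    have hfilter : Finset.univ.filter (fun q => φ q = k)
        = Finset.univ.filter (fun q => βx q = (k:ℕ)) := by
      ext q
      simp [hφ, Fin.ext_iff]
    rw [hfilter]
    have hDjk : D j k = ∑ q ∈ Finset.univ.filter (fun q => βx q = (k:ℕ)), |x q| * A (p j) q := rfl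
    rw [hDjk, Finset.mul_sum]
    refine Finset.sum_congr rfl fun q hq => ?_
    have hβq : βx q = (k:ℕ) := by
      simpa using (Finset.mem_filter.mp hq).2
    conv_lhs => rw [hxdec q, hβq]
    ring
  have hzs : ∀ j : Fin (r+1), 0 < (A *ᵥ x) (p j) * δ * (-1:ℝ)^((j:Fin (r+1)):ℕ) := by
    intro j
    have h := hβysign (p j) (hp1 j)
    rw [hp2 j] at h
    exact aux_sign_pos _ _ _ h
  have hDsr : ∀ s : ℕ, 1 ≤ s → s ≤ r+1 → ∀ f g : Fin s → Fin (r+1), StrictMono f → StrictMono g →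
      0 ≤ ε s * (D.submatrix f g).det := by
    intro s hs1 hs2 f g hf hg
    have h := aux_U_sr A ε hA βx hβxmono (fun q => |x q|) (fun q => abs_nonneg _)
      s hs1 (by omega) r (p ∘ f) g (hpmono.comp hf) hg
    have heq : D.submatrix f g = Matrix.of (fun i j : Fin s =>
        ∑ q ∈ Finset.univ.filter (fun q => βx q = ((g j) : ℕ)), |x q| * A ((p ∘ f) i) q) := rfl
    rw [heq]
    exact h
  exact aux_core r ε hε0 hsv D hDsr γ δ hγpm hδpm (fun j => (A *ᵥ x) (p j)) hz hzs
end

section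
/- Let n ≥ 2, and let A be an n×n matrix that is SSR_{n−1}(ε) for ε = (ε_1,…,ε_{n−1}). Let x_0 ∈ ℝ^n have no zero entries and at least two consecutive coordinates of the same sign (so x_0 does not lie in the alternating bi-orthant). Then S^+(A x_0) ≤ S^-(x_0). -/
open Matrix Filter

lemma sc_cons (a : ℝ) (t : List ℝ) :
    signChanges (a :: t) = (if a * t.headI < 0 then 1 else 0) + signChanges t := by
  cases t with
  | nil => simp [signChanges, default]
  | cons b r =>
    simp only [signChanges, List.tail_cons, List.zip_cons_cons, List.countP_cons, List.headI]
    by_cases h : a * b < 0 <;> simp [h] <;> omega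

lemma headI_ofFn (m : ℕ) (v : ℕ → ℝ) :
    (List.ofFn (fun i : Fin (m+1) => v (i : ℕ))).headI = v 0 := by
  rw [List.ofFn_succ]; rfl

lemma sc_ofFn_eq_sum : ∀ (m : ℕ) (u : ℕ → ℝ),
    signChanges (List.ofFn (fun i : Fin (m+1) => u (i : ℕ))) =
      ∑ i ∈ Finset.range m, (if u i * u (i+1) < 0 then 1 else 0) := by
  intro m
  induction m with
  | zero => intro u; simp [signChanges]
  | succ m IH =>
    intro u
    rw [List.ofFn_succ]
    have hfun : (fun i : Fin (m+1) => u (((i.succ : Fin (m+2))) : ℕ))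
        = (fun i : Fin (m+1) => (fun k => u (k+1)) (i : ℕ)) := by
      funext i; simp [Fin.val_succ]
    rw [show ((0 : Fin (m+2)) : ℕ) = 0 from rfl]
    rw [hfun, sc_cons, headI_ofFn m (fun k => u (k+1)), IH (fun k => u (k+1)), Finset.sum_range_succ']
    norm_num
    omega

lemma exists_alt_sublist : ∀ (l : List ℝ), (∀ x ∈ l, x ≠ 0) → l ≠ [] →
    ∃ m : List ℝ, m.Sublist l ∧ m.length = signChanges l + 1 ∧
      m.Chain' (fun a b => a * b < 0) ∧ 0 < m.headI * l.headI := by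
  intro l
  induction l with
  | nil => intro _ h; exact absurd rfl h
  | cons a t IH =>
    intro hnz _
    have ha : a ≠ 0 := hnz a List.mem_cons_self
    cases t with
    | nil =>
      refine ⟨[a], List.Sublist.refl _, by simp [signChanges], List.isChain_singleton a, ?_⟩
      simp only [List.headI]
      rcases ha.lt_or_gt with h | h
      · exact mul_pos_of_neg_of_neg h h
      · exact mul_pos h h
    | cons b r =>
      have hb : b ≠ 0 := hnz b (by simp)
      obtain ⟨m', hsub, hlen, hchain, hhead⟩ :=
        IH (fun x hx => hnz x (List.mem_cons_of_mem a hx)) (by simp)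
      have hm'len : 1 ≤ m'.length := by omega
      obtain ⟨h0, rest, rfl⟩ : ∃ h0 rest, m' = h0 :: rest := by
        cases m' with
        | nil => simp at hm'len
        | cons x xs => exact ⟨x, xs, rfl⟩
      have hhb : 0 < h0 * b := by simpa [List.headI] using hhead
      by_cases hab : a * b < 0
      · -- prepend a
        refine ⟨a :: h0 :: rest, hsub.cons₂ a, ?_, ?_, ?_⟩
        · rw [sc_cons]; rw [if_pos (show a * (b :: r).headI < 0 from hab)]
          simp only [List.length_cons] at hlen ⊢; omega
        · unfold List.Chain'; rw [List.isChain_cons_cons]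
          refine ⟨?_, hchain⟩
          nlinarith [sq_nonneg b, mul_pos hhb hhb]
        · simp only [List.headI]
          rcases ha.lt_or_gt with h | h
          · exact mul_pos_of_neg_of_neg h h
          · exact mul_pos h h
      · -- same sign: replace head
        have hab' : 0 < a * b := by
          rcases lt_or_gt_of_ne (mul_ne_zero ha hb) with h | h
          · exact absurd h hab
          · exact h
        have hah : 0 < a * h0 := by nlinarith [sq_nonneg b]
        refine ⟨a :: rest, ?_, ?_, ?_, ?_⟩
        · exact ((List.sublist_cons_self h0 rest).trans hsub).cons₂ a
        · rw [sc_cons]; rw [if_neg (show ¬ a * (b :: r).headI < 0 from hab)]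
          simp only [List.length_cons] at hlen ⊢; omega
        · cases rest with
          | nil => exact List.isChain_singleton a
          | cons c s =>
            unfold List.Chain'; rw [List.isChain_cons_cons]
            unfold List.Chain' at hchain; rw [List.isChain_cons_cons] at hchain
            refine ⟨?_, hchain.2⟩
            nlinarith [hchain.1, sq_nonneg h0]
        · simp only [List.headI]
          rcases ha.lt_or_gt with h | h
          · exact mul_pos_of_neg_of_neg h h
          · exact mul_pos h h

lemma alt_signs (g : ℕ → ℝ) (k : ℕ) (hk : 1 ≤ k)
    (h : ∀ t, t + 1 ≤ k → g t * g (t+1) < 0) :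
    ∃ θ : ℝ, (θ = 1 ∨ θ = -1) ∧ ∀ t ≤ k, 0 < θ * (-1)^t * g t := by
  have hg0 : g 0 * g 1 < 0 := h 0 hk
  refine ⟨if 0 < g 0 then 1 else -1, by split <;> simp, ?_⟩
  intro t
  induction t with
  | zero =>
    intro _
    split
    · next hpos => simpa using hpos
    · next hneg =>
      have : g 0 ≠ 0 := fun hz => by rw [hz] at hg0; simp at hg0
      have : g 0 < 0 := lt_of_le_of_ne (not_lt.mp hneg) this
      simpa using this
  | succ t IHt =>
    intro ht1
    have hP := IHt (by omega)
    have hs := h t (by omega)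
    set θ : ℝ := if 0 < g 0 then 1 else -1 with hθ
    have hθsq : θ * θ = 1 := by rw [hθ]; split <;> norm_num
    set s : ℝ := θ * (-1)^t with hsdef
    have hssq : s * s = 1 := by
      have h2 : ((-1:ℝ)^t) * ((-1)^t) = 1 := by
        rw [← pow_add]
        simp [pow_add, pow_mul, ← two_mul]
      calc s * s = (θ * θ) * (((-1:ℝ)^t) * ((-1)^t)) := by ring
        _ = 1 := by rw [hθsq, h2]; norm_num
    have hgt2 : 0 < g t * g t := by
      have h4 : (s * g t) * (s * g t) = (s * s) * (g t * g t) := by ring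
      have h5 := mul_pos hP hP
      rw [h4, hssq, one_mul] at h5
      exact h5
    have h3 : (s * g (t+1)) * (g t * g t) < 0 := by
      have := mul_neg_of_pos_of_neg hP hs
      nlinarith [this]
    have h6 : s * g (t+1) < 0 := by
      by_contra hc
      push_neg at hc
      nlinarith [mul_nonneg hc (le_of_lt hgt2)]
    rw [pow_succ]
    have h7 : θ * ((-1:ℝ)^t * -1) * g (t+1) = -(s * g (t+1)) := by rw [hsdef]; ring
    rw [h7]
    linarith

lemma exists_alt_indices {N k : ℕ} (w : Fin N → ℝ) (hw : ∀ i, w i ≠ 0) (hN : 0 < N)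
    (hsc : k + 1 ≤ signChanges (List.ofFn w)) :
    ∃ j : Fin (k+2) → Fin N, StrictMono j ∧ ∃ θ : ℝ, (θ = 1 ∨ θ = -1) ∧
      ∀ t : Fin (k+2), 0 < θ * (-1)^(t:ℕ) * w (j t) := by
  set l : List ℝ := List.ofFn w with hl
  have hlne : l ≠ [] := by
    rw [hl, ← List.length_pos_iff_ne_nil, List.length_ofFn]; exact hN
  have hnz : ∀ x ∈ l, x ≠ 0 := by
    intro x hx
    rw [hl, List.mem_ofFn] at hx
    obtain ⟨i, rfl⟩ := hx
    exact hw i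
  obtain ⟨m, hsub, hlen, hchain, _⟩ := exists_alt_sublist l hnz hlne
  -- take the first (k+2) elements
  set m' : List ℝ := m.take (k+2) with hm'
  have hsub' : m'.Sublist l := (List.take_sublist _ _).trans hsub
  have hlen' : m'.length = k + 2 := by
    rw [hm', List.length_take]; omega
  have hchain' : m'.Chain' (fun a b => a * b < 0) := hchain.take _
  obtain ⟨is, heq, hpw⟩ := List.sublist_eq_map_getElem hsub'
  have hislen : is.length = k + 2 := by
    have := congrArg List.length heq
    rw [List.length_map] at this
    omega
  have hlenl : l.length = N := List.length_ofFn (f := w)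
  set j : Fin (k+2) → Fin N := fun t => Fin.cast hlenl (is.get (Fin.cast hislen.symm t)) with hj
  have hjm : StrictMono j := by
    intro t s hts
    have := List.pairwise_iff_getElem.mp hpw t s (by omega) (by omega) hts
    simpa [hj] using this
  have hval : ∀ t : Fin (k+2), m'.get (Fin.cast hlen'.symm t) = w (j t) := by
    intro t
    rw [List.get_of_eq heq, List.get_eq_getElem, List.getElem_map]
    have h2 : ∀ X : Fin l.length, l[X] = w (Fin.cast hlenl X) := fun X => by simp [l]; rfl
    rw [h2]
    simp only [hj]
    congr 2
  -- chain gives adjacent products negative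
  have hadj : ∀ t : ℕ, t + 1 ≤ k + 1 →
      (fun t : ℕ => if h : t < k + 2 then w (j ⟨t, h⟩) else 0) t *
      (fun t : ℕ => if h : t < k + 2 then w (j ⟨t, h⟩) else 0) (t+1) < 0 := by
    intro t ht
    have h1 : t < k + 2 := by omega
    have h2 : t + 1 < k + 2 := by omega
    simp only [dif_pos h1, dif_pos h2]
    have := List.isChain_iff_getElem.mp hchain' t (by omega)
    have e1 : m'.get ⟨t, by omega⟩ = w (j ⟨t, h1⟩) := by
      have := hval ⟨t, h1⟩; simpa using this
    have e2 : m'.get ⟨t+1, by omega⟩ = w (j ⟨t+1, h2⟩) := by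
      have := hval ⟨t+1, h2⟩; simpa using this
    simp only [List.get_eq_getElem] at e1 e2
    rw [e1, e2] at this
    exact this
  obtain ⟨θ, hθ, halt⟩ := alt_signs _ (k+1) (by omega) hadj
  refine ⟨j, hjm, θ, hθ, ?_⟩
  intro t
  have := halt t (by omega)
  simp only [dif_pos t.isLt] at this
  simpa using this

lemma nat_ivt (f : ℕ → ℕ) (hstep : ∀ m, f (m+1) ≤ f m + 1) (h0 : f 0 = 0) :
    ∀ M c, c ≤ f M → ∃ m, m ≤ M ∧ f m = c := by
  intro M
  induction M with
  | zero => intro c hc; exact ⟨0, le_refl 0, by omega⟩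
  | succ M IH =>
    intro c hc
    by_cases h : c ≤ f M
    · obtain ⟨m, hm, he⟩ := IH c h; exact ⟨m, by omega, he⟩
    · have := hstep M; exact ⟨M+1, le_refl _, by omega⟩

lemma neg_one_pow_mul_self (m : ℕ) : ((-1:ℝ)^m) * ((-1:ℝ)^m) = 1 := by
  rw [← pow_add, ← two_mul, pow_mul]
  norm_num

lemma detB_pos {n d : ℕ} (A : Matrix (Fin n) (Fin n) ℝ) (x0 : Fin n → ℝ)
    (hx0 : ∀ i, x0 i ≠ 0)
    (βF : Fin n → ℕ)
    (F : Fin (d+1) → Finset (Fin n))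
    (hF : ∀ jj i, i ∈ F jj ↔ βF i = jj)
    (hFne : ∀ jj, (F jj).Nonempty)
    (hmono : ∀ i i' : Fin n, i ≤ i' → βF i ≤ βF i')
    (e : ℝ) (f : Fin (d+1) → Fin n)
    (hdet : ∀ r : Fin (d+1) → Fin n, StrictMono r → 0 < e * (A.submatrix f r).det) :
    0 < e * (Matrix.of fun jj t => ∑ l ∈ F jj, |x0 l| * A (f t) l).det := by
  classical
  set M : Matrix (Fin (d+1)) (Fin (d+1)) ℝ :=
    Matrix.of fun jj t => ∑ l ∈ F jj, |x0 l| * A (f t) l with hM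
  have hrows : (fun jj => M jj) = fun jj => ∑ l ∈ F jj, |x0 l| • (fun t => A (f t) l) := by
    funext jj
    simp only [hM, Matrix.of_apply]
    ext t
    rw [Finset.sum_apply]
    simp [Pi.smul_apply]
  have hdet1 : M.det =
      ∑ r ∈ Fintype.piFinset F, (∏ jj, |x0 (r jj)|) * (A.submatrix f r).det := by
    have h0 : M.det = Matrix.detRowAlternating.toMultilinearMap (fun jj => M jj) := rfl
    rw [h0, hrows, MultilinearMap.map_sum_finset]
    apply Finset.sum_congr rfl
    intro r _
    rw [MultilinearMap.map_smul_univ]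
    show (∏ jj, |x0 (r jj)|) • Matrix.det ((A.submatrix f r).transpose) = _
    rw [Matrix.det_transpose, smul_eq_mul]
  have hpine : (Fintype.piFinset F).Nonempty := by
    rw [Fintype.piFinset_nonempty]
    exact hFne
  rw [hdet1, Finset.mul_sum]
  apply Finset.sum_pos
  · intro r hr
    rw [Fintype.mem_piFinset] at hr
    have hrm : StrictMono r := by
      intro a b hab
      have ha : βF (r a) = a := (hF a (r a)).mp (hr a)
      have hb : βF (r b) = b := (hF b (r b)).mp (hr b)
      by_contra hc
      push_neg at hc
      have h5 := hmono _ _ hc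
      rw [ha, hb] at h5
      have hab' : (a:ℕ) < b := hab
      omega
    have h1 : 0 < ∏ jj, |x0 (r jj)| :=
      Finset.prod_pos (fun jj _ => abs_pos.mpr (hx0 (r jj)))
    have h2 := hdet r hrm
    calc (0:ℝ) = (∏ jj, |x0 (r jj)|) * 0 := by ring
      _ < (∏ jj, |x0 (r jj)|) * (e * (A.submatrix f r).det) := by
          exact mul_lt_mul_of_pos_left h2 h1
      _ = e * ((∏ jj, |x0 (r jj)|) * (A.submatrix f r).det) := by ring
  · exact hpine

lemma orth_sum {n d : ℕ} (B : Matrix (Fin n) (Fin (d+1)) ℝ) (jdx : Fin (d+2) → Fin n)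
    (jj : Fin (d+1)) :
    ∑ t : Fin (d+2), (-1:ℝ)^(t:ℕ) * (B.submatrix (fun a => jdx (t.succAbove a)) id).det
      * B (jdx t) jj = 0 := by
  classical
  set D : Matrix (Fin (d+2)) (Fin (d+2)) ℝ :=
    Matrix.of (fun t s => Fin.cases (B (jdx t) jj) (fun s' => B (jdx t) s') s) with hD
  have hD0 : D.det = 0 := by
    rw [← Matrix.det_transpose]
    refine Matrix.det_zero_of_row_eq (i := (0 : Fin (d+2))) (j := jj.succ)
      (Ne.symm (Fin.succ_ne_zero jj)) ?_
    funext t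
    show D t 0 = D t jj.succ
    simp [hD]
  rw [Matrix.det_succ_column_zero] at hD0
  rw [← hD0]
  apply Finset.sum_congr rfl
  intro t _
  have h1 : D t 0 = B (jdx t) jj := rfl
  have h2 : D.submatrix t.succAbove Fin.succ
      = B.submatrix (fun a => jdx (t.succAbove a)) id := by
    funext a b
    simp [hD, Matrix.submatrix_apply]
  rw [h1, h2]
  ring


theorem stmt19 {n : ℕ} (hn : 2 ≤ n) (A : Matrix (Fin n) (Fin n) ℝ) (ε : ℕ → ℝ)
    (hsv : ∀ r, ε r = 1 ∨ ε r = -1)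
    (hA : ∀ r : ℕ, 1 ≤ r → r ≤ n - 1 → ∀ (f g : Fin r → Fin n),
      StrictMono f → StrictMono g → 0 < ε r * (A.submatrix f g).det)
    (x0 : Fin n → ℝ) (hx0 : ∀ i, x0 i ≠ 0)
    (hconsec : ∃ i j : Fin n, (j : ℕ) = (i : ℕ) + 1 ∧ 0 < x0 i * x0 j) :
    Sp (A *ᵥ x0) ≤ Sm x0 := by
  classical
  set y : Fin n → ℝ := A *ᵥ x0 with hy
  have hn0 : 0 < n := by omega
  set u : ℕ → ℝ := fun i => if h : i < n then x0 ⟨i, h⟩ else 1 with hu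
  have hue : ∀ i : Fin n, u (i : ℕ) = x0 i := by
    intro i; simp [hu, i.isLt]
  set step : ℕ → ℕ := fun i => if u i * u (i+1) < 0 then 1 else 0 with hstepdef
  set β : ℕ → ℕ := fun m => ∑ i ∈ Finset.range m, step i with hβ
  have hβ0 : β 0 = 0 := by simp [hβ]
  have hβsucc : ∀ m, β (m+1) = β m + step m := by
    intro m; simp [hβ, Finset.sum_range_succ]
  have hβstep : ∀ m, β (m+1) ≤ β m + 1 := by
    intro m; rw [hβsucc]; have : step m ≤ 1 := by simp only [hstepdef]; split <;> omega
    omega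
  have hβmono : Monotone β := by
    intro a b hab
    simp only [hβ]
    exact Finset.sum_le_sum_of_subset (Finset.range_subset_range.mpr hab)
  -- Sm x0 = β (n-1)
  have hSm : Sm x0 = β (n-1) := by
    obtain ⟨m1, hm1⟩ : ∃ m1, n = m1 + 1 := ⟨n - 1, by omega⟩
    have hfil : (List.ofFn x0).filter (fun x => decide (x ≠ 0)) = List.ofFn x0 := by
      rw [List.filter_eq_self]
      intro a ha
      rw [List.mem_ofFn] at ha
      obtain ⟨i, rfl⟩ := ha
      simp [hx0 i]
    have hcongr : List.ofFn x0 = List.ofFn (fun i : Fin n => u (i : ℕ)) := by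
      congr 1; funext i; rw [hue]
    rw [Sm, hfil, hcongr]
    subst hm1
    rw [sc_ofFn_eq_sum m1 u]
    simp only [hβ, hstepdef]
    norm_num
  -- sign property
  have hsgn : ∀ i : ℕ, i < n → 0 < u 0 * ((-1:ℝ)^(β i) * u i) := by
    intro i
    induction i with
    | zero =>
      intro _
      rw [hβ0, pow_zero, one_mul]
      have : u 0 ≠ 0 := by rw [show (0:ℕ) = ((⟨0, hn0⟩ : Fin n) : ℕ) from rfl, hue]; exact hx0 _
      rcases this.lt_or_gt with h | h
      · exact mul_pos_of_neg_of_neg h h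
      · exact mul_pos h h
    | succ i IH =>
      intro hi1
      have hi : i < n := by omega
      have hIH := IH hi
      have hui : u i ≠ 0 := by
        rw [show (i:ℕ) = ((⟨i, hi⟩ : Fin n) : ℕ) from rfl, hue]; exact hx0 _
      have hui1 : u (i+1) ≠ 0 := by
        rw [show (i+1:ℕ) = ((⟨i+1, hi1⟩ : Fin n) : ℕ) from rfl, hue]; exact hx0 _
      rw [hβsucc]
      by_cases hc : u i * u (i+1) < 0
      · have hst : step i = 1 := by rw [hstepdef]; simp [hc]
        rw [hst, pow_succ]
        nlinarith [mul_pos hIH hIH, mul_self_pos.mpr hui, neg_one_pow_mul_self (β i)]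
      · have hst : step i = 0 := by rw [hstepdef]; simp [hc]
        have hpos : 0 < u i * u (i+1) := by
          rcases lt_or_gt_of_ne (mul_ne_zero hui hui1) with h | h
          · exact absurd h hc
          · exact h
        rw [hst, add_zero]
        nlinarith [mul_pos hIH hpos, mul_self_pos.mpr hui, neg_one_pow_mul_self (β i)]
  set d : ℕ := β (n-1) with hd
  -- d ≤ n - 2
  have hdle : d + 1 ≤ n - 1 := by
    obtain ⟨i, j, hij, hprod⟩ := hconsec
    have hiv : (i : ℕ) < n - 1 := by have := j.isLt; omega
    have hsi : step (i : ℕ) = 0 := by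
      simp only [hstepdef]
      have h1 : u (i:ℕ) = x0 i := hue i
      have h2 : u ((i:ℕ)+1) = x0 j := by
        rw [show ((i:ℕ)+1) = (j:ℕ) from hij.symm, hue]
      rw [h1, h2]
      simp [not_lt.mpr (le_of_lt hprod)]
    have hsplit : d = step (i:ℕ) + ∑ r ∈ (Finset.range (n-1)).erase (i:ℕ), step r := by
      simp only [hd, hβ]
      rw [← Finset.add_sum_erase _ _ (Finset.mem_range.mpr hiv)]
    have hbound : ∑ r ∈ (Finset.range (n-1)).erase (i:ℕ), step r ≤ n - 2 := by
      calc ∑ r ∈ (Finset.range (n-1)).erase (i:ℕ), step r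
          ≤ ∑ _r ∈ (Finset.range (n-1)).erase (i:ℕ), 1 := by
            apply Finset.sum_le_sum; intro r _; simp only [hstepdef]; split <;> omega
        _ = ((Finset.range (n-1)).erase (i:ℕ)).card := by simp
        _ = n - 2 := by
            rw [Finset.card_erase_of_mem (Finset.mem_range.mpr hiv), Finset.card_range]
            omega
    omega
  have hβle : ∀ i : Fin n, β (i:ℕ) ≤ d := by
    intro i
    rw [hd]
    exact hβmono (by have := i.isLt; omega)
  -- fibers
  set F : Fin (d+1) → Finset (Fin n) :=
    fun jj => Finset.univ.filter (fun i => β (i:ℕ) = (jj:ℕ)) with hF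
  have hFmem : ∀ jj i, i ∈ F jj ↔ β (i:ℕ) = (jj:ℕ) := by
    intro jj i; simp [hF]
  have hFne : ∀ jj, (F jj).Nonempty := by
    intro jj
    obtain ⟨m, hm, he⟩ := nat_ivt β hβstep hβ0 (n-1) (jj:ℕ) (by have := jj.isLt; omega)
    exact ⟨⟨m, by omega⟩, (hFmem jj _).mpr he⟩
  set B : Matrix (Fin n) (Fin (d+1)) ℝ :=
    Matrix.of (fun i jj => ∑ l ∈ F jj, |x0 l| * A i l) with hB
  set s : ℝ := if 0 < u 0 then 1 else -1 with hs
  set z : Fin (d+1) → ℝ := fun jj => s * (-1:ℝ)^(jj:ℕ) with hz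
  have hzne : ∀ jj, z jj ≠ 0 := by
    intro jj
    simp only [hz, hs]
    split <;> · simp [pow_ne_zero]
  have hu0ne : u 0 ≠ 0 := by
    rw [show (0:ℕ) = (((⟨0, hn0⟩ : Fin n)) : ℕ) from rfl, hue]; exact hx0 _
  -- x0 value identity
  have hxval : ∀ l : Fin n, s * (-1:ℝ)^(β (l:ℕ)) * |x0 l| = x0 l := by
    intro l
    have h := hsgn (l:ℕ) l.isLt
    rw [hue] at h
    rcases Nat.even_or_odd (β (l:ℕ)) with hpar | hpar
    · rw [hpar.neg_one_pow] at h ⊢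
      rw [hs]
      split
      · next hpos =>
        have hxp : 0 < x0 l := by nlinarith
        rw [abs_of_pos hxp]; ring
      · next hneg =>
        have hu0lt : u 0 < 0 := lt_of_le_of_ne (not_lt.mp hneg) hu0ne
        have hxn : x0 l < 0 := by nlinarith
        rw [abs_of_neg hxn]; ring
    · rw [hpar.neg_one_pow] at h ⊢
      rw [hs]
      split
      · next hpos =>
        have hxn : x0 l < 0 := by nlinarith
        rw [abs_of_neg hxn]; ring
      · next hneg =>
        have hu0lt : u 0 < 0 := lt_of_le_of_ne (not_lt.mp hneg) hu0ne
        have hxp : 0 < x0 l := by nlinarith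
        rw [abs_of_pos hxp]; ring
  -- B z = y
  set g : Fin n → Fin (d+1) := fun l => ⟨β (l:ℕ), by have := hβle l; omega⟩ with hg
  have hFg : ∀ jj, F jj = Finset.univ.filter (fun l => g l = jj) := by
    intro jj
    ext l
    simp [hF, hg, Fin.ext_iff]
  have hBz : B *ᵥ z = y := by
    funext i
    have h1 : (B *ᵥ z) i = ∑ jj, ∑ l ∈ F jj, (|x0 l| * A i l) * z jj := by
      simp [Matrix.mulVec, dotProduct, hB, Finset.sum_mul]
    have h2 : ∀ jj : Fin (d+1), ∀ l ∈ F jj, (|x0 l| * A i l) * z jj = x0 l * A i l := by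
      intro jj l hl
      rw [hFmem] at hl
      simp only [hz]
      rw [← hl]
      calc |x0 l| * A i l * (s * (-1:ℝ)^(β (l:ℕ)))
          = (s * (-1:ℝ)^(β (l:ℕ)) * |x0 l|) * A i l := by ring
        _ = x0 l * A i l := by rw [hxval]
    calc (B *ᵥ z) i = ∑ jj, ∑ l ∈ F jj, (|x0 l| * A i l) * z jj := h1
      _ = ∑ jj : Fin (d+1), ∑ l ∈ F jj, x0 l * A i l :=
          Finset.sum_congr rfl (fun jj _ => Finset.sum_congr rfl (h2 jj))
      _ = ∑ jj : Fin (d+1), ∑ l ∈ Finset.univ.filter (fun l => g l = jj), x0 l * A i l := by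
          apply Finset.sum_congr rfl
          intro jj _
          rw [hFg]
      _ = ∑ l : Fin n, x0 l * A i l := Finset.sum_fiberwise _ _ _
      _ = y i := by
          rw [hy]
          simp [Matrix.mulVec, dotProduct, mul_comm]
  -- determinant positivity for B minors
  have hBdet : ∀ f : Fin (d+1) → Fin n, StrictMono f →
      0 < ε (d+1) * (B.submatrix f id).det := by
    intro f hf
    have h := detB_pos A x0 hx0 (fun i => β (i:ℕ)) F hFmem hFne
      (fun i i' hii => hβmono (Fin.le_def.mp hii)) (ε (d+1)) f
      (fun r hr => hA (d+1) (by omega) hdle f r hf hr)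
    have he : ((B.submatrix f id).transpose) =
        Matrix.of (fun jj t => ∑ l ∈ F jj, |x0 l| * A (f t) l) := rfl
    rw [← Matrix.det_transpose (B.submatrix f id), he]
    exact h
  -- contradiction machine
  have hcontra : ∀ f : Fin (d+1) → Fin n, StrictMono f → (∀ t, y (f t) = 0) → False := by
    intro f hf hzero
    have hdet := hBdet f hf
    have hdetne : (B.submatrix f id).det ≠ 0 := by
      intro h0; rw [h0, mul_zero] at hdet; exact lt_irrefl 0 hdet
    have hmv : (B.submatrix f id) *ᵥ z = 0 := by
      funext t
      have hh : ((B.submatrix f id) *ᵥ z) t = (B *ᵥ z) (f t) := by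
        simp [Matrix.mulVec, dotProduct, Matrix.submatrix_apply]
      rw [hh, hBz]
      exact hzero t
    have hz0 := Matrix.eq_zero_of_mulVec_eq_zero hdetne hmv
    exact hzne 0 (by rw [hz0]; rfl)
  have hyne : y ≠ 0 := by
    intro h0
    refine hcontra (fun t => ⟨(t:ℕ), by have := t.isLt; omega⟩)
      (fun a b hab => by simp only [Fin.mk_lt_mk]; exact hab) (fun t => by rw [h0]; rfl)
  rw [Sp, if_neg hyne, hSm]
  apply Finset.sup_le
  intro σ _
  by_contra hgt
  push_neg at hgt
  set w : Fin n → ℝ := fun i => if y i = 0 then (if σ i then (1:ℝ) else -1) else y i with hw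
  have hwne : ∀ i, w i ≠ 0 := by
    intro i
    simp only [hw]
    split
    · split <;> norm_num
    · next h => exact h
  have hsc : d + 1 ≤ signChanges (List.ofFn w) := by
    rw [hd]; omega
  obtain ⟨jdx, hjmono, θ, hθ, halt⟩ := exists_alt_indices w hwne hn0 hsc
  have hyw : ∀ t : Fin (d+2), 0 ≤ θ * (-1:ℝ)^(t:ℕ) * y (jdx t) := by
    intro t
    by_cases h0 : y (jdx t) = 0
    · rw [h0]; simp
    · have hwy : w (jdx t) = y (jdx t) := by simp only [hw]; simp [h0]
      have := halt t
      rw [hwy] at this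
      exact le_of_lt this
  have hosum : ∑ t : Fin (d+2),
      ((-1:ℝ)^(t:ℕ) * (B.submatrix (fun a => jdx (t.succAbove a)) id).det) * y (jdx t) = 0 := by
    have h1 : ∀ t : Fin (d+2), y (jdx t) = ∑ jj, B (jdx t) jj * z jj := by
      intro t; rw [← hBz]; rfl
    calc ∑ t : Fin (d+2),
        ((-1:ℝ)^(t:ℕ) * (B.submatrix (fun a => jdx (t.succAbove a)) id).det) * y (jdx t)
        = ∑ t : Fin (d+2), ∑ jj : Fin (d+1),
            ((-1:ℝ)^(t:ℕ) * (B.submatrix (fun a => jdx (t.succAbove a)) id).det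
              * B (jdx t) jj) * z jj := by
          apply Finset.sum_congr rfl
          intro t _
          rw [h1 t, Finset.mul_sum]
          apply Finset.sum_congr rfl
          intro jj _
          ring
      _ = ∑ jj : Fin (d+1), (∑ t : Fin (d+2),
            (-1:ℝ)^(t:ℕ) * (B.submatrix (fun a => jdx (t.succAbove a)) id).det
              * B (jdx t) jj) * z jj := by
          rw [Finset.sum_comm]
          apply Finset.sum_congr rfl
          intro jj _
          rw [Finset.sum_mul]
      _ = 0 := by
          apply Finset.sum_eq_zero
          intro jj _
          rw [orth_sum B jdx jj, zero_mul]
  have hterm : ∀ t : Fin (d+2), 0 ≤ (θ * ε (d+1)) *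
      (((-1:ℝ)^(t:ℕ) * (B.submatrix (fun a => jdx (t.succAbove a)) id).det) * y (jdx t)) := by
    intro t
    have hdt : 0 < ε (d+1) * (B.submatrix (fun a => jdx (t.succAbove a)) id).det :=
      hBdet _ (hjmono.comp (Fin.strictMono_succAbove t))
    have h2 := hyw t
    have h3 := mul_nonneg (le_of_lt hdt) h2
    calc (0:ℝ) ≤ (ε (d+1) * (B.submatrix (fun a => jdx (t.succAbove a)) id).det)
        * (θ * (-1:ℝ)^(t:ℕ) * y (jdx t)) := h3
      _ = (θ * ε (d+1)) *
          (((-1:ℝ)^(t:ℕ) * (B.submatrix (fun a => jdx (t.succAbove a)) id).det) * y (jdx t)) := by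
          ring
  have hsum0 : ∑ t : Fin (d+2), (θ * ε (d+1)) *
      (((-1:ℝ)^(t:ℕ) * (B.submatrix (fun a => jdx (t.succAbove a)) id).det) * y (jdx t)) = 0 := by
    rw [← Finset.mul_sum, hosum, mul_zero]
  have hall0 := (Finset.sum_eq_zero_iff_of_nonneg (fun t _ => hterm t)).mp hsum0
  have hy0 : ∀ t : Fin (d+2), y (jdx t) = 0 := by
    intro t
    have h3 := hall0 t (Finset.mem_univ t)
    have hθne : θ ≠ 0 := by rcases hθ with h | h <;> rw [h] <;> norm_num
    have hεne : ε (d+1) ≠ 0 := by rcases hsv (d+1) with h | h <;> rw [h] <;> norm_num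
    have hdt : 0 < ε (d+1) * (B.submatrix (fun a => jdx (t.succAbove a)) id).det :=
      hBdet _ (hjmono.comp (Fin.strictMono_succAbove t))
    have hdne : (B.submatrix (fun a => jdx (t.succAbove a)) id).det ≠ 0 := by
      intro h0; rw [h0, mul_zero] at hdt; exact lt_irrefl 0 hdt
    have hpne : (-1:ℝ)^(t:ℕ) ≠ 0 := by
      apply pow_ne_zero; norm_num
    rcases mul_eq_zero.mp h3 with h4 | h4
    · exact absurd h4 (mul_ne_zero hθne hεne)
    rcases mul_eq_zero.mp h4 with h5 | h5
    · exact absurd h5 (mul_ne_zero hpne hdne)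
    · exact h5
  exact hcontra (fun a => jdx a.castSucc) (hjmono.comp Fin.strictMono_castSucc)
    (fun t => hy0 t.castSucc)
end
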